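/- Let F : ℤ³ → ℤ³ be the linear map F(m_1, m_2, m_3) = (-2m_1, 44m_1 + 28m_2, -662m_1 - 632m_2 - 992m_3). Then the image of F equals the set of triples (σ_1, σ_3, σ_5) ∈ ℤ³ such that 2 ∣ σ_1, 28 ∣ (σ_3 + 22σ_1), and 6944 ∣ (7σ_5 + 158σ_3 + 1159σ_1). -/
import Mathlib


/-- The image of `F(m₁,m₂,m₃) = (-2m₁, 44m₁+28m₂, -662m₁-632m₂-992m₃)` consists exactly of
the triples `(σ₁,σ₃,σ₅)` with `2 ∣ σ₁`, `28 ∣ σ₃ + 22σ₁`, and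
`6944 ∣ 7σ₅ + 158σ₃ + 1159σ₁`. -/
theorem image_forgetful_CP6_D2 :
    ∀ s1 s3 s5 : ℤ,
      (∃ m1 m2 m3 : ℤ,
          s1 = -2 * m1 ∧ s3 = 44 * m1 + 28 * m2 ∧
          s5 = -662 * m1 - 632 * m2 - 992 * m3) ↔
      (2 ∣ s1 ∧ 28 ∣ (s3 + 22 * s1) ∧ 6944 ∣ (7 * s5 + 158 * s3 + 1159 * s1)) := by
  intro s1 s3 s5
  constructor
  · rintro ⟨m1, m2, m3, rfl, rfl, rfl⟩
    exact ⟨⟨-m1, by ring⟩, ⟨m2, by ring⟩, ⟨-m3, by ring⟩⟩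
  · rintro ⟨⟨a, ha⟩, ⟨b, hb⟩, ⟨c, hc⟩⟩
    refine ⟨-a, b, -c, by omega, by omega, ?_⟩
    have : 7 * s5 = 7 * (-662 * -a - 632 * b - 992 * -c) := by omega
    omega
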